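/- arXiv:2101.11117 — 2 statements merged into one kernel-verified Lean document; each statement's English description precedes it below -/
import Mathlib

section
/- Let N1, N2, N3, T be real numbers with N1 > N2 ≥ N3 > 0 and T + 1 > N2 (hence also T + 1 > N3). Define R2' = 1 − (N2/N1)·(1 − (T + 1 − N3 − N1)·(N2 − N3)/((T + 1 − N2)·(T + 1 − N3))). Then R2' ≥ C(T − N2, N3) − C(T − N3, N1) if and only if (T + 1 − N3)·(T + 1 − N2 − N1) ≥ (T + 1 − N3 − N1)·(N2 − N3). -/
/-- Point-to-point streaming capacity under delay `T` and `N` erasures. -/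
noncomputable def C (T N : ℝ) : ℝ := (T + 1 - N) / (T + 1)

theorem stmt_7 (N1 N2 N3 T : ℝ) (h12 : N1 > N2) (h23 : N2 ≥ N3) (h3 : N3 > 0)
    (hT : T + 1 > N2) :
    1 - (N2 / N1) *
        (1 - (T + 1 - N3 - N1) * (N2 - N3) / ((T + 1 - N2) * (T + 1 - N3))) ≥
      C (T - N2) N3 - C (T - N3) N1 ↔
    (T + 1 - N3) * (T + 1 - N2 - N1) ≥ (T + 1 - N3 - N1) * (N2 - N3) := by
  have hN1 : N1 > 0 := lt_of_lt_of_le h3 (le_of_lt (lt_of_le_of_lt h23 h12))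
  have ha : T + 1 - N2 > 0 := by linarith
  have hb : T + 1 - N3 > 0 := by linarith
  have key : (1 - (N2 / N1) *
        (1 - (T + 1 - N3 - N1) * (N2 - N3) / ((T + 1 - N2) * (T + 1 - N3))))
      - (C (T - N2) N3 - C (T - N3) N1)
      = (N1 - N2) * ((T + 1 - N3) * (T + 1 - N2 - N1) - (T + 1 - N3 - N1) * (N2 - N3))
        / (N1 * ((T + 1 - N2) * (T + 1 - N3))) := by
    unfold C
    have h1 : T - N2 + 1 = T + 1 - N2 := by ring
    have h2 : T - N3 + 1 = T + 1 - N3 := by ring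
    rw [h1, h2]
    field_simp
    ring
  constructor <;> intro h
  · have h' : (0:ℝ) ≤ (N1 - N2) * ((T + 1 - N3) * (T + 1 - N2 - N1) - (T + 1 - N3 - N1) * (N2 - N3))
        / (N1 * ((T + 1 - N2) * (T + 1 - N3))) := by
      rw [← key]; linarith
    have hden : (0:ℝ) < N1 * ((T + 1 - N2) * (T + 1 - N3)) := by positivity
    rw [le_div_iff₀ hden] at h'
    nlinarith
  · have h' : (0:ℝ) ≤ (N1 - N2) * ((T + 1 - N3) * (T + 1 - N2 - N1) - (T + 1 - N3 - N1) * (N2 - N3))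
        / (N1 * ((T + 1 - N2) * (T + 1 - N3))) := by
      apply div_nonneg (mul_nonneg (by linarith) (by linarith)) (by positivity)
    linarith [key ▸ h']
end

section
/- Let N1, N2, N3, T be real numbers with N1 > N2 > N3 > 0 and T + 1 ≥ N1 + N3. Then (T + 1 − N3 − N1)·(N2 − N3)/((T + 1 − N1)·(T + 1 − N3)) < (T + 1 − N2 − N3)/(T + 1 − N2) − (T + 1 − N3 − N2)/(T + 1 − N3), i.e., the rate R1 achievable by the first user at the corner point where R2 = C(T − N3, N2) is strictly smaller than C(T − N2, N3) − C(T − N3, N2), so the sum rate at that corner point is strictly below the sumrate capacity. -/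
theorem stmt_9 (N1 N2 N3 T : ℝ) (h12 : N1 > N2) (h23 : N2 > N3) (h3 : N3 > 0)
    (hT : T + 1 ≥ N1 + N3) :
    (T + 1 - N3 - N1) * (N2 - N3) / ((T + 1 - N1) * (T + 1 - N3)) <
      (T + 1 - N2 - N3) / (T + 1 - N2) - (T + 1 - N3 - N2) / (T + 1 - N3) := by
  have h1 : T + 1 - N1 > 0 := by linarith
  have h2 : T + 1 - N2 > 0 := by linarith
  have h3' : T + 1 - N3 > 0 := by linarith
  rw [div_sub_div _ _ (ne_of_gt h2) (ne_of_gt h3'), div_lt_div_iff₀ (by positivity) (by positivity)]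
  nlinarith [mul_pos h1 h3', mul_pos h2 h3', mul_pos (sub_pos.2 h12) (sub_pos.2 h23),
    mul_pos (mul_pos (sub_pos.2 h12) (sub_pos.2 h23)) h3, mul_pos h3 h3',
    mul_pos (mul_pos (mul_pos (sub_pos.2 h12) (sub_pos.2 h23)) h3) h3']
end
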